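/- Let U ⊆ ℝ², let μ > 0, let E be a normed additive group, and let K : ℤ² × ℤ² → E satisfy ‖K(x,y)‖ ≤ μ⁻¹ exp(−μ‖x−y‖) for all x, y ∈ ℤ². Let χ_U : ℝ² → ℝ denote the indicator function of U. Then for all x, y ∈ ℤ²: |χ_U(x) − χ_U(y)| · ‖K(x,y)‖ ≤ μ⁻¹ exp(−(μ/3)(‖x−y‖ + d(x, ∂U) + d(y, ∂U))). (This is the kernel estimate for the commutator [A, Λ_U] of an operator A with exponentially decaying kernel K and the multiplication operator Λ_U by χ_U, whose kernel at (x,y) is (χ_U(y) − χ_U(x))·K(x,y).) -/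
import Mathlib

open Metric Set

noncomputable section

/-- The canonical embedding of `ℤ²` into the Euclidean plane. -/
def emb (p : ℤ × ℤ) : EuclideanSpace ℝ (Fin 2) :=
  (WithLp.equiv 2 (Fin 2 → ℝ)).symm ![(p.1 : ℝ), (p.2 : ℝ)]

lemma preconnected_frontier {X : Type*} [TopologicalSpace X] {t s : Set X}
    (ht : IsPreconnected t) {a b : X} (ha : a ∈ t) (hb : b ∈ t)
    (haS : a ∈ s) (hbS : b ∉ s) : ∃ z ∈ t, z ∈ frontier s := by
  by_contra h
  push_neg at h
  have hsub : t ⊆ interior s ∪ (closure s)ᶜ := by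
    intro p hp
    by_cases hc : p ∈ closure s
    · left
      by_contra hi
      exact h p hp ⟨hc, hi⟩
    · exact Or.inr hc
  have hain : a ∈ interior s := by
    by_contra hi
    exact h a ha ⟨subset_closure haS, hi⟩
  have hbin : b ∈ (closure s)ᶜ := by
    intro hc
    exact h b hb ⟨hc, fun hi => hbS (interior_subset hi)⟩
  obtain ⟨z, hz, hz1, hz2⟩ := ht (interior s) (closure s)ᶜ isOpen_interior
    isClosed_closure.isOpen_compl hsub ⟨a, ha, hain⟩ ⟨b, hb, hbin⟩
  exact hz2 (subset_closure (interior_subset hz1))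

lemma infDist_frontier_le {V : Type*} [NormedAddCommGroup V] [NormedSpace ℝ V]
    {s : Set V} {a b : V} (ha : a ∈ s) (hb : b ∉ s) :
    infDist a (frontier s) ≤ dist a b ∧ infDist b (frontier s) ≤ dist a b := by
  obtain ⟨z, hzseg, hzf⟩ := preconnected_frontier (convex_segment a b).isPreconnected
    (left_mem_segment ℝ a b) (right_mem_segment ℝ a b) ha hb
  obtain ⟨u, v, hu, hv, huv, rfl⟩ := hzseg
  constructor
  · refine (infDist_le_dist_of_mem hzf).trans ?_
    have : a - (u • a + v • b) = v • (a - b) := by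
      rw [smul_sub]; rw [show (v : ℝ) = 1 - u by linarith]
      module
    rw [dist_eq_norm, this, dist_eq_norm, norm_smul, Real.norm_of_nonneg hv]
    nlinarith [norm_nonneg (a - b)]
  · refine (infDist_le_dist_of_mem hzf).trans ?_
    have : b - (u • a + v • b) = u • (b - a) := by
      rw [smul_sub]; rw [show (u : ℝ) = 1 - v by linarith]
      module
    rw [dist_eq_norm, this, dist_comm, dist_eq_norm, norm_smul, Real.norm_of_nonneg hu,
      ← norm_neg (b - a), neg_sub]
    nlinarith [norm_nonneg (a - b)]

theorem commutator_kernel_estimate (U : Set (EuclideanSpace ℝ (Fin 2)))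
    (μ : ℝ) (hμ : 0 < μ) {E : Type*} [NormedAddGroup E]
    (K : ℤ × ℤ → ℤ × ℤ → E)
    (hK : ∀ x y : ℤ × ℤ, ‖K x y‖ ≤ μ⁻¹ * Real.exp (-μ * ‖emb x - emb y‖))
    (x y : ℤ × ℤ) :
    |indicator U (fun _ => (1 : ℝ)) (emb x) - indicator U (fun _ => (1 : ℝ)) (emb y)|
        * ‖K x y‖ ≤
      μ⁻¹ * Real.exp (-(μ / 3) * (‖emb x - emb y‖
        + infDist (emb x) (frontier U) + infDist (emb y) (frontier U))) := by
  have hRHS : 0 ≤ μ⁻¹ * Real.exp (-(μ / 3) * (‖emb x - emb y‖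
      + infDist (emb x) (frontier U) + infDist (emb y) (frontier U))) :=
    mul_nonneg (inv_nonneg.mpr hμ.le) (Real.exp_pos _).le
  by_cases hxy : (emb x ∈ U ↔ emb y ∈ U)
  · have : indicator U (fun _ => (1 : ℝ)) (emb x) = indicator U (fun _ => (1 : ℝ)) (emb y) := by
      by_cases h : emb x ∈ U
      · rw [indicator_of_mem h, indicator_of_mem (hxy.mp h)]
      · rw [indicator_of_notMem h, indicator_of_notMem (fun h' => h (hxy.mpr h'))]
    rw [this, sub_self, abs_zero, zero_mul]
    exact hRHS
  · have hdiff : |indicator U (fun _ => (1 : ℝ)) (emb x) - indicator U (fun _ => (1 : ℝ)) (emb y)| ≤ 1 := by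
      by_cases h : emb x ∈ U <;> by_cases h' : emb y ∈ U <;>
        simp [indicator_of_mem, indicator_of_notMem, h, h']
    have hdist : infDist (emb x) (frontier U) ≤ dist (emb x) (emb y) ∧
        infDist (emb y) (frontier U) ≤ dist (emb x) (emb y) := by
      by_cases hx : emb x ∈ U
      · have hy : emb y ∉ U := fun h => hxy ⟨fun _ => h, fun _ => hx⟩
        exact infDist_frontier_le hx hy
      · have hy : emb y ∈ U := by
          by_contra hy
          exact hxy ⟨fun h => absurd h hx, fun h => absurd h hy⟩
        have := infDist_frontier_le hy hx
        rw [dist_comm] at this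
        exact ⟨this.2, this.1⟩
    have hexp : -μ * ‖emb x - emb y‖ ≤ -(μ / 3) * (‖emb x - emb y‖
        + infDist (emb x) (frontier U) + infDist (emb y) (frontier U)) := by
      rw [dist_eq_norm] at hdist
      nlinarith [hdist.1, hdist.2, hμ.le]
    calc |indicator U (fun _ => (1 : ℝ)) (emb x) - indicator U (fun _ => (1 : ℝ)) (emb y)|
          * ‖K x y‖ ≤ 1 * ‖K x y‖ := by
            exact mul_le_mul_of_nonneg_right hdiff (norm_nonneg _)
      _ = ‖K x y‖ := one_mul _
      _ ≤ μ⁻¹ * Real.exp (-μ * ‖emb x - emb y‖) := hK x y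
      _ ≤ _ := by
            exact mul_le_mul_of_nonneg_left (Real.exp_le_exp.mpr hexp) (inv_nonneg.mpr hμ.le)
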